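/- Let G ∈ ℝ^{k×n} and H ∈ ℝ^{k×p}, and let K := {y ∈ ℝ^p : ∃x ∈ ℝ^n, Gx + Hy ≥ 0}. Then {w ∈ ℝ^p : ∃u ∈ ℝ^k, u ≥ 0, w = −Hᵀu, Gᵀu = 0} = K° := {w ∈ ℝ^p : ∀y ∈ K, wᵀy ≤ 0}. -/

import Mathlib

open Matrix Set Pointwise

noncomputable section

/-- `cone B = {l • x : l ≥ 0, x ∈ conv B}` -/
def coneOf {E : Type*} [AddCommGroup E] [Module ℝ E] (B : Set E) : Set E :=
  {y | ∃ l : ℝ, 0 ≤ l ∧ ∃ x ∈ convexHull ℝ B, y = l • x}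

/-- `F` is a face of the convex set `B`. -/
def IsFaceOf {E : Type*} [AddCommGroup E] [Module ℝ E] (F B : Set E) : Prop :=
  Convex ℝ F ∧ F ⊆ B ∧
    ∀ y ∈ B, ∀ z ∈ B, ∀ l : ℝ, 0 < l → l < 1 → l • y + (1 - l) • z ∈ F → y ∈ F ∧ z ∈ F

/-- recession cone `0⁺B` of a convex set. -/
def recCone {E : Type*} [AddCommGroup E] [Module ℝ E] (B : Set E) : Set E :=
  {d | ∀ x ∈ B, ∀ t : ℝ, 0 ≤ t → x + t • d ∈ B}

/-- lineality space `L(B) = 0⁺B ∩ (−0⁺B)`. -/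
def linealOf {E : Type*} [AddCommGroup E] [Module ℝ E] (B : Set E) : Set E :=
  recCone B ∩ -recCone B

/-- dimension of (the affine hull of) a set. -/
def sdim {E : Type*} [AddCommGroup E] [Module ℝ E] (B : Set E) : ℕ :=
  Module.finrank ℝ (vectorSpan ℝ B)

def IsPolyhedron {d : ℕ} (B : Set (Fin d → ℝ)) : Prop :=
  ∃ (k : ℕ) (W : Matrix (Fin k) (Fin d) ℝ) (v : Fin k → ℝ), B = {x | v ≤ W.mulVec x}

/-- orthogonal complement (as a set) of a set of vectors. -/
def orthSet {d : ℕ} (L : Set (Fin d → ℝ)) : Set (Fin d → ℝ) :=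
  {y | ∀ z ∈ L, y ⬝ᵥ z = 0}

/-- polar cone `K° = {w : ∀ y ∈ K, wᵀy ≤ 0}`. -/
def polarCone {d : ℕ} (K : Set (Fin d → ℝ)) : Set (Fin d → ℝ) :=
  {w | ∀ y ∈ K, w ⬝ᵥ y ≤ 0}

/-- the last index of `Fin q` (1-based index `q`). -/
def lastIdx (q : ℕ) (hq : 0 < q) : Fin q := ⟨q - 1, by omega⟩

/-- `y ↦ (y,1)`. -/
def lift1 {q : ℕ} (y : Fin q → ℝ) : Fin (q + 1) → ℝ := Fin.snoc y 1

/-- `y ↦ (y,0)`. -/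
def lift0 {q : ℕ} (y : Fin q → ℝ) : Fin (q + 1) → ℝ := Fin.snoc y 0

/-- `p(y) = (y₁,…,y_q)`. -/
def projq {q : ℕ} (y : Fin (q + 1) → ℝ) : Fin q → ℝ := fun i => y i.castSucc

/-- `Φ(B) = cl cone (B × {1})`. -/
def PhiMap {q : ℕ} (B : Set (Fin q → ℝ)) : Set (Fin (q + 1) → ℝ) :=
  closure (coneOf (lift1 '' B))

/-- the block matrix `G = (A; −ZᵀP; 0)`. -/
def Gmat {m n q r : ℕ} (A : Matrix (Fin m) (Fin n) ℝ) (P : Matrix (Fin q) (Fin n) ℝ)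
    (Z : Matrix (Fin q) (Fin r) ℝ) : Matrix (Fin (m + r + 1)) (Fin n) ℝ :=
  fun i j =>
    if h : (i : ℕ) < m then A ⟨i, h⟩ j
    else if h2 : (i : ℕ) < m + r then -(∑ l : Fin q, Z l ⟨(i : ℕ) - m, by omega⟩ * P l j)
    else 0

/-- the block matrix `H` with rows `(0, −b)`, `(Zᵀ, 0)` and `(0,…,0,1)`. -/
def Hmat {m q r : ℕ} (b : Fin m → ℝ) (Z : Matrix (Fin q) (Fin r) ℝ) :
    Matrix (Fin (m + r + 1)) (Fin (q + 1)) ℝ :=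
  fun i j =>
    if h : (i : ℕ) < m then (if (j : ℕ) = q then -b ⟨i, h⟩ else 0)
    else if h2 : (i : ℕ) < m + r then
      (if hj : (j : ℕ) < q then Z ⟨j, hj⟩ ⟨(i : ℕ) - m, by omega⟩ else 0)
    else (if (j : ℕ) = q then 1 else 0)

/-- dual objective `D(u,w) = (w₁,…,w_{q−1}, bᵀu)`. -/
def Dmap {m q : ℕ} (b : Fin m → ℝ) (uw : (Fin m → ℝ) × (Fin q → ℝ)) : Fin q → ℝ :=
  fun i => if (i : ℕ) < q - 1 then uw.2 i else b ⬝ᵥ uw.1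

/-- `R* = {v : v₁ = ⋯ = v_{q−1} = 0, v_q ≥ 0}`. -/
def RstarSet (q : ℕ) (hq : 0 < q) : Set (Fin q → ℝ) :=
  {v | (∀ i : Fin q, (i : ℕ) < q - 1 → v i = 0) ∧ 0 ≤ v (lastIdx q hq)}

/-- dual feasible set `T`. -/
def Tset {m n q r : ℕ} (A : Matrix (Fin m) (Fin n) ℝ) (P : Matrix (Fin q) (Fin n) ℝ)
    (Z : Matrix (Fin q) (Fin r) ℝ) (cbar : Fin q → ℝ) :
    Set ((Fin m → ℝ) × (Fin q → ℝ)) :=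
  {uw | ∃ v : Fin r → ℝ, 0 ≤ v ∧ uw.2 = Z.mulVec v ∧
    Aᵀ.mulVec uw.1 = Pᵀ.mulVec uw.2 ∧ cbar ⬝ᵥ uw.2 = 1 ∧ 0 ≤ uw.1}

/-- `φ(y,w) = Σ_{i<q} y_i w_i + y_q (1 − Σ_{i<q} c̄_i w_i) − w_q`. -/
def phiFn {q : ℕ} (hq : 0 < q) (cbar : Fin q → ℝ) (y w : Fin q → ℝ) : ℝ :=
  (∑ i : Fin q, if (i : ℕ) < q - 1 then y i * w i else 0)
    + y (lastIdx q hq) * (1 - ∑ i : Fin q, if (i : ℕ) < q - 1 then cbar i * w i else 0)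
    - w (lastIdx q hq)

/-- duality map `Ψ(F*) = ⋂_{w ∈ F*} {y ∈ Pset : φ(y,w) = 0}`. -/
def PsiMap {q : ℕ} (hq : 0 < q) (cbar : Fin q → ℝ) (Pset : Set (Fin q → ℝ))
    (Fstar : Set (Fin q → ℝ)) : Set (Fin q → ℝ) :=
  ⋂ w ∈ Fstar, {y ∈ Pset | phiFn hq cbar y w = 0}

/-- `My = (−y₁,…,−y_{q−1}, c̄₁y₁+⋯+c̄_{q−1}y_{q−1} − y_{q+1}, y_q)`. -/
def Mmap {q : ℕ} (hq : 0 < q) (cbar : Fin q → ℝ) (y : Fin (q + 1) → ℝ) : Fin (q + 1) → ℝ :=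
  fun i =>
    if (i : ℕ) < q - 1 then -y i
    else if (i : ℕ) = q - 1 then
      (∑ j : Fin q, if (j : ℕ) < q - 1 then cbar j * y j.castSucc else 0) - y (Fin.last q)
    else y ((lastIdx q hq).castSucc)

/-- `M⁻¹w = (−w₁,…,−w_{q−1}, w_{q+1}, −cᵀw)` where `c = (c̄,0)`. -/
def MinvMap {q : ℕ} (cbar : Fin q → ℝ) (w : Fin (q + 1) → ℝ) : Fin (q + 1) → ℝ :=
  fun i =>
    if (i : ℕ) < q - 1 then -w i
    else if (i : ℕ) = q - 1 then w (Fin.last q)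
    else -((Fin.snoc cbar 0 : Fin (q + 1) → ℝ) ⬝ᵥ w)

/-- `p*(w) = (w₁,…,w_{q−1},w_{q+1})`. -/
def pstarMap {q : ℕ} (w : Fin (q + 1) → ℝ) : Fin q → ℝ :=
  fun i => if (i : ℕ) < q - 1 then w i.castSucc else w (Fin.last q)

/-- `y` generates an extreme ray of the pointed convex cone `Q`. -/
def IsExtremeDir {E : Type*} [AddCommGroup E] [Module ℝ E] (Q : Set E) (y : E) : Prop :=
  y ∈ Q ∧ y ≠ 0 ∧ IsFaceOf (coneOf {y}) Q

/-- `σ(u,w) = (u¹, −p(w))` where `u = (u¹,u²,u³) ∈ ℝ^m×ℝ^r×ℝ`. -/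
def sigmaMap {m q r : ℕ} (uw : (Fin (m + r + 1) → ℝ) × (Fin (q + 1) → ℝ)) :
    (Fin m → ℝ) × (Fin q → ℝ) :=
  (fun i => uw.1 (Fin.castLE (by omega) i), -projq uw.2)

lemma carath_cone {ι : Type*} [Fintype ι] [DecidableEq ι] {E : Type*} [AddCommGroup E] [Module ℝ E]
    (v : ι → E) :
    ∀ (N : ℕ) (t : ι → ℝ), (Finset.univ.filter (t · ≠ 0)).card ≤ N → 0 ≤ t →
      ∃ t' : ι → ℝ, 0 ≤ t' ∧ (∑ i, t' i • v i) = ∑ i, t i • v i ∧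
        LinearIndependent ℝ (fun i : {i // t' i ≠ 0} => v i) := by
  intro N
  induction N with
  | zero =>
    intro t hcard ht
    refine ⟨t, ht, rfl, ?_⟩
    have h0 : ∀ i, t i = 0 := by
      intro i
      by_contra h
      have : i ∈ Finset.univ.filter (t · ≠ 0) := by simp [h]
      have := Finset.card_pos.mpr ⟨i, this⟩
      omega
    have : IsEmpty {i // t i ≠ 0} := ⟨fun ⟨i, hi⟩ => hi (h0 i)⟩
    exact linearIndependent_empty_type
  | succ N ih =>
    intro t hcard ht
    by_cases hli : LinearIndependent ℝ (fun i : {i // t i ≠ 0} => v i)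
    · exact ⟨t, ht, rfl, hli⟩
    · obtain ⟨g, hg0, j0, hj0⟩ := Fintype.not_linearIndependent_iff.mp hli
      -- we may assume some coefficient is positive
      wlog hpos : ∃ h : {i // t i ≠ 0}, 0 < g h generalizing g
      · refine this (-g) (by simpa using hg0) (by simpa using hj0) ?_
        push_neg at hpos
        refine ⟨j0, ?_⟩
        simp only [Pi.neg_apply]
        rcases lt_or_eq_of_le (hpos j0) with h | h
        · linarith
        · exact absurd h hj0
      obtain ⟨h0, hh0⟩ := hpos
      classical
      set c : ι → ℝ := fun i => if h : t i ≠ 0 then g ⟨i, h⟩ else 0 with hc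
      have hcsum : ∑ i, c i • v i = 0 := by
        have h1 : ∑ i ∈ Finset.univ.filter (fun i => t i ≠ 0), c i • v i
            = ∑ i : {i // t i ≠ 0}, g i • v i := by
          rw [Finset.sum_subtype (p := fun i => t i ≠ 0) _ (by simp) (fun i => c i • v i)]
          refine Finset.sum_congr rfl fun i _ => ?_
          simp [hc, i.2]
        have h2 : ∑ i, c i • v i = ∑ i ∈ Finset.univ.filter (fun i => t i ≠ 0), c i • v i := by
          refine (Finset.sum_subset (Finset.subset_univ _) fun i _ hi => ?_).symm
          simp only [Finset.mem_filter, Finset.mem_univ, true_and, not_not] at hi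
          simp [hc, hi]
        rw [h2, h1, hg0]
      -- the positive-coefficient indices
      set P : Finset ι := Finset.univ.filter (fun i => 0 < c i) with hP
      have hPne : P.Nonempty := ⟨h0, by simp [hP, hc, h0.2, hh0]⟩
      obtain ⟨i0, hi0P, hi0min⟩ := P.exists_min_image (fun i => t i / c i) hPne
      have hci0 : 0 < c i0 := by simpa [hP] using hi0P
      set lam : ℝ := t i0 / c i0 with hlam
      have hlam0 : 0 ≤ lam := div_nonneg (ht i0) hci0.le
      set t'' : ι → ℝ := fun i => t i - lam * c i with ht''
      have ht''0 : 0 ≤ t'' := by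
        intro i
        simp only [ht'', Pi.zero_apply]
        rcases le_or_gt (c i) 0 with h | h
        · have := mul_nonpos_of_nonneg_of_nonpos hlam0 h
          have := ht i
          simp only [Pi.zero_apply] at this
          linarith
        · have := (le_div_iff₀ h).mp (hi0min i (by simp [hP, h]))
          linarith
      have ht''i0 : t'' i0 = 0 := by
        show t i0 - lam * c i0 = 0
        rw [hlam, div_mul_cancel₀ _ hci0.ne', sub_self]
      have hti0 : t i0 ≠ 0 := by
        intro h
        have : c i0 = 0 := by simp [hc, h]
        rw [this] at hci0
        exact lt_irrefl _ hci0
      have hsupp : Finset.univ.filter (t'' · ≠ 0) ⊆ (Finset.univ.filter (t · ≠ 0)).erase i0 := by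
        intro i hi
        simp only [Finset.mem_filter, Finset.mem_univ, true_and] at hi
        rw [Finset.mem_erase]
        refine ⟨fun h => hi (h ▸ ht''i0), ?_⟩
        simp only [Finset.mem_filter, Finset.mem_univ, true_and]
        intro h
        apply hi
        have hc0 : c i = 0 := by simp [hc, h]
        show t i - lam * c i = 0
        rw [h, hc0, mul_zero, sub_zero]
      have hcard' : (Finset.univ.filter (t'' · ≠ 0)).card ≤ N := by
        have h1 := Finset.card_le_card hsupp
        have h2 : ((Finset.univ.filter (t · ≠ 0)).erase i0).card < (Finset.univ.filter (t · ≠ 0)).card := by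
          apply Finset.card_erase_lt_of_mem
          simp [hti0]
        omega
      have hsum'' : ∑ i, t'' i • v i = ∑ i, t i • v i := by
        simp only [ht'', sub_smul, Finset.sum_sub_distrib, mul_smul]
        rw [← Finset.smul_sum, hcsum, smul_zero, sub_zero]
      obtain ⟨t', h1, h2, h3⟩ := ih t'' hcard' ht''0
      exact ⟨t', h1, by rw [h2, hsum''], h3⟩

lemma cone_isClosed {ι : Type*} [Fintype ι] [DecidableEq ι] {E : Type*} [NormedAddCommGroup E]
    [NormedSpace ℝ E] [FiniteDimensional ℝ E] (v : ι → E) :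
    IsClosed {x : E | ∃ t : ι → ℝ, 0 ≤ t ∧ x = ∑ i, t i • v i} := by
  classical
  have sum_ext : ∀ (S : Finset ι) (t : ι → ℝ), (∀ i ∉ S, t i = 0) →
      ∑ i, t i • v i = ∑ i : {i // i ∈ S}, t i • v i := by
    intro S t h
    rw [← Finset.sum_subtype (p := (· ∈ S)) _ (fun _ => Iff.rfl) (fun i => t i • v i)]
    exact (Finset.sum_subset (Finset.subset_univ S) fun i _ hi => by rw [h i hi, zero_smul]).symm
  have key : ∀ S : Finset ι, LinearIndependent ℝ (fun i : {i // i ∈ S} => v i) →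
      IsClosed {x : E | ∃ t : ι → ℝ, 0 ≤ t ∧ (∀ i ∉ S, t i = 0) ∧ x = ∑ i, t i • v i} := by
    intro S hs
    set L : ({i // i ∈ S} → ℝ) →ₗ[ℝ] E :=
      { toFun := fun t => ∑ i, t i • v i
        map_add' := by intro a b; simp [add_smul, Finset.sum_add_distrib]
        map_smul' := by intro m a; simp [mul_smul, Finset.smul_sum] } with hL
    have hker : LinearMap.ker L = ⊥ := by
      rw [Submodule.eq_bot_iff]
      intro t ht
      have := Fintype.linearIndependent_iff.mp hs t ht
      funext i
      exact this i
    have hemb := LinearMap.isClosedEmbedding_of_injective (f := L) hker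
    have heq : {x : E | ∃ t : ι → ℝ, 0 ≤ t ∧ (∀ i ∉ S, t i = 0) ∧ x = ∑ i, t i • v i}
        = L '' {t : {i // i ∈ S} → ℝ | 0 ≤ t} := by
      ext x
      simp only [Set.mem_setOf_eq, Set.mem_image]
      constructor
      · rintro ⟨t, h1, h2, rfl⟩
        exact ⟨fun i => t i, fun i => h1 i, (sum_ext S t h2).symm⟩
      · rintro ⟨t, h1, rfl⟩
        refine ⟨fun i => if h : i ∈ S then t ⟨i, h⟩ else 0, ?_, fun i hi => dif_neg hi, ?_⟩
        · intro i
          by_cases h : i ∈ S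
          · simpa [h] using h1 ⟨i, h⟩
          · simp [h]
        · rw [sum_ext S _ (fun i hi => dif_neg hi)]
          show (∑ i : {i // i ∈ S}, t i • v i) = _
          exact Finset.sum_congr rfl fun i _ => by simp [i.2]
    rw [heq]
    exact hemb.isClosedMap _ (isClosed_Ici (a := (0 : {i // i ∈ S} → ℝ)))
  have cover : {x : E | ∃ t : ι → ℝ, 0 ≤ t ∧ x = ∑ i, t i • v i}
      = ⋃ S : {S : Finset ι // LinearIndependent ℝ (fun i : {i // i ∈ S} => v i)},
          {x : E | ∃ t : ι → ℝ, 0 ≤ t ∧ (∀ i ∉ S.1, t i = 0) ∧ x = ∑ i, t i • v i} := by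
    ext x
    simp only [Set.mem_setOf_eq, Set.mem_iUnion]
    constructor
    · rintro ⟨t, ht, rfl⟩
      obtain ⟨t', h1, h2, h3⟩ := carath_cone v (Finset.univ.filter (t · ≠ 0)).card t le_rfl ht
      have hmem : ∀ i : ι, i ∈ Finset.univ.filter (t' · ≠ 0) ↔ t' i ≠ 0 := by
        intro i; simp
      have hli : LinearIndependent ℝ (fun i : {i // i ∈ Finset.univ.filter (t' · ≠ 0)} => v i) :=
        (linearIndependent_equiv (Equiv.subtypeEquivRight
          (fun i => by simp : ∀ i, i ∈ Finset.univ.filter (t' · ≠ 0) ↔ t' i ≠ 0))).mpr h3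
      refine ⟨⟨Finset.univ.filter (t' · ≠ 0), hli⟩, t', h1, ?_, h2.symm⟩
      intro i hi
      simpa using hi
    · rintro ⟨S, t, h1, h2, h3⟩
      exact ⟨t, h1, h3⟩
  rw [cover]
  exact isClosed_iUnion_of_finite fun S => key S.1 S.2

open scoped InnerProductSpace in
lemma farkas_inner {ι : Type*} [Fintype ι] [DecidableEq ι] {E : Type*} [NormedAddCommGroup E]
    [InnerProductSpace ℝ E] [FiniteDimensional ℝ E] (v : ι → E) (b : E)
    (h : ∀ y : E, (∀ i, 0 ≤ ⟪v i, y⟫_ℝ) → 0 ≤ ⟪b, y⟫_ℝ) :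
    ∃ t : ι → ℝ, 0 ≤ t ∧ b = ∑ i, t i • v i := by
  classical
  set C : ConvexCone ℝ E :=
    { carrier := {x : E | ∃ t : ι → ℝ, 0 ≤ t ∧ x = ∑ i, t i • v i}
      smul_mem' := by
        rintro c hc x ⟨t, ht, rfl⟩
        exact ⟨c • t, fun i => mul_nonneg hc.le (ht i), by
          simp [Finset.smul_sum, mul_smul]⟩
      add_mem' := by
        rintro x ⟨t, ht, rfl⟩ y ⟨s, hs, rfl⟩
        exact ⟨t + s, fun i => add_nonneg (ht i) (hs i), by
          simp [add_smul, Finset.sum_add_distrib]⟩ } with hC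
  set C' : ProperCone ℝ E :=
    { carrier := C
      add_mem' := fun hx hy => C.add_mem' hx hy
      zero_mem' := ⟨0, le_refl _, by simp⟩
      smul_mem' := by
        rintro c x ⟨t, ht, rfl⟩
        exact ⟨(c : ℝ) • t, fun i => mul_nonneg c.2 (ht i), by
          simp [Finset.smul_sum, mul_smul, NNReal.smul_def]⟩
      isClosed' := cone_isClosed v } with hC'
  by_contra hb
  have hbC : b ∉ C' := hb
  obtain ⟨y, hy1, hy2⟩ := ProperCone.hyperplane_separation' C' hbC
  have hvy : ∀ i, 0 ≤ ⟪v i, y⟫_ℝ := by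
    intro i
    apply hy1
    refine ⟨fun j => if j = i then 1 else 0, fun j => by positivity, ?_⟩
    simp [Finset.sum_ite_eq']
  have := h y hvy
  linarith

open scoped InnerProductSpace in
lemma farkas_dot {ι κ : Type*} [Fintype ι] [DecidableEq ι] [Fintype κ] [DecidableEq κ]
    (v : ι → (κ → ℝ)) (b : κ → ℝ)
    (h : ∀ y : κ → ℝ, (∀ i, 0 ≤ v i ⬝ᵥ y) → 0 ≤ b ⬝ᵥ y) :
    ∃ t : ι → ℝ, 0 ≤ t ∧ b = ∑ i, t i • v i := by
  classical
  set L := WithLp.linearEquiv 2 ℝ (κ → ℝ) with hLdef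
  have key : ∀ (x : EuclideanSpace ℝ κ) (y : κ → ℝ),
      ⟪x, L.symm y⟫_ℝ = (L x) ⬝ᵥ y := by
    intro x y
    simp [PiLp.inner_apply, dotProduct, hLdef, WithLp.linearEquiv_apply,
      WithLp.linearEquiv_symm_apply, mul_comm]
  have side : ∀ y : EuclideanSpace ℝ κ, (∀ i, 0 ≤ ⟪L.symm (v i), y⟫_ℝ) → 0 ≤ ⟪L.symm b, y⟫_ℝ := by
    intro y hy
    have h1 : ∀ i, 0 ≤ (v i) ⬝ᵥ (L y) := by
      intro i
      have := hy i
      rwa [show (y : EuclideanSpace ℝ κ) = L.symm (L y) from rfl, key] at this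
    have := h (L y) h1
    rwa [show (y : EuclideanSpace ℝ κ) = L.symm (L y) from rfl, key]
  obtain ⟨t, ht, hb⟩ := farkas_inner (fun i => L.symm (v i)) (L.symm b) side
  refine ⟨t, ht, ?_⟩
  have := congrArg L hb
  rw [map_sum] at this
  simpa only [LinearEquiv.map_smul, LinearEquiv.apply_symm_apply] using this

/-- Farkas-type duality: the cone `{−Hᵀu : Gᵀu = 0, u ≥ 0}` is the polar of
the projected cone `K = {y : ∃x, Gx + Hy ≥ 0}`. -/
theorem stmt19 (k n p : ℕ) (G : Matrix (Fin k) (Fin n) ℝ) (H : Matrix (Fin k) (Fin p) ℝ)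
    (K : Set (Fin p → ℝ))
    (hK : K = {y | ∃ x : Fin n → ℝ, 0 ≤ G.mulVec x + H.mulVec y}) :
    {w : Fin p → ℝ | ∃ u : Fin k → ℝ, 0 ≤ u ∧ w = -(Hᵀ.mulVec u) ∧ Gᵀ.mulVec u = 0}
      = {w : Fin p → ℝ | ∀ y ∈ K, w ⬝ᵥ y ≤ 0} := by
  ext w
  simp only [Set.mem_setOf_eq]
  constructor
  · rintro ⟨u, hu, rfl, hGu⟩ y hy
    rw [hK] at hy
    obtain ⟨x, hx⟩ := hy
    have h1 : (Hᵀ.mulVec u) ⬝ᵥ y = u ⬝ᵥ (H.mulVec y) := by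
      rw [Matrix.mulVec_transpose, ← Matrix.dotProduct_mulVec]
    have h2 : u ⬝ᵥ (G.mulVec x) = 0 := by
      rw [Matrix.dotProduct_mulVec, ← Matrix.mulVec_transpose, hGu, zero_dotProduct]
    have h3 : 0 ≤ u ⬝ᵥ (G.mulVec x + H.mulVec y) := by
      apply Finset.sum_nonneg
      intro i _
      exact mul_nonneg (hu i) (hx i)
    rw [dotProduct_add, h2, zero_add] at h3
    rw [neg_dotProduct, h1]
    linarith
  · intro hw
    have side : ∀ y : Fin n ⊕ Fin p → ℝ,
        (∀ i, 0 ≤ (Sum.elim (fun j => G i j) (fun j => H i j) : Fin n ⊕ Fin p → ℝ) ⬝ᵥ y) →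
        0 ≤ (Sum.elim 0 (-w) : Fin n ⊕ Fin p → ℝ) ⬝ᵥ y := by
      intro y hy
      set x : Fin n → ℝ := fun j => y (Sum.inl j) with hxdef
      set y2 : Fin p → ℝ := fun j => y (Sum.inr j) with hy2def
      have hvy : ∀ i, (Sum.elim (fun j => G i j) (fun j => H i j) : Fin n ⊕ Fin p → ℝ) ⬝ᵥ y
          = (G.mulVec x + H.mulVec y2) i := by
        intro i
        simp only [dotProduct, Fintype.sum_sum_type, Sum.elim_inl, Sum.elim_inr,
          Pi.add_apply, Matrix.mulVec, dotProduct]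
        rfl
      have hmem : y2 ∈ K := by
        rw [hK]
        refine ⟨x, fun i => ?_⟩
        rw [Pi.zero_apply, ← hvy i]
        exact hy i
      have hwy := hw y2 hmem
      have hb2 : (Sum.elim 0 (-w) : Fin n ⊕ Fin p → ℝ) ⬝ᵥ y = -(w ⬝ᵥ y2) := by
        simp only [dotProduct, Fintype.sum_sum_type, Sum.elim_inl, Sum.elim_inr,
          Pi.zero_apply, Pi.neg_apply, zero_mul, Finset.sum_const_zero, zero_add,
          neg_mul, Finset.sum_neg_distrib]
        rfl
      rw [hb2]
      linarith
    obtain ⟨t, ht, hb⟩ := farkas_dot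
      (fun i => Sum.elim (fun j => G i j) (fun j => H i j))
      (Sum.elim 0 (-w)) side
    refine ⟨t, ht, ?_, ?_⟩
    · funext j
      have := congrFun hb (Sum.inr j)
      simp only [Sum.elim_inr, Pi.neg_apply, Finset.sum_apply, Pi.smul_apply,
        Sum.elim_inr, smul_eq_mul] at this
      have hr : (Hᵀ.mulVec t) j = ∑ i, t i * H i j := by
        simp [Matrix.mulVec, dotProduct, Matrix.transpose_apply, mul_comm]
      rw [Pi.neg_apply, hr, ← this, neg_neg]
    · funext j
      have := congrFun hb (Sum.inl j)
      simp only [Sum.elim_inl, Pi.zero_apply, Finset.sum_apply, Pi.smul_apply,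
        Sum.elim_inl, smul_eq_mul] at this
      have hr : (Gᵀ.mulVec t) j = ∑ i, t i * G i j := by
        simp [Matrix.mulVec, dotProduct, Matrix.transpose_apply, mul_comm]
      rw [Pi.zero_apply, hr, ← this]
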